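/- Let a, b₁, b₂, γ be positive reals and c a real parameter satisfying the Routh–Hurwitz hypothesis: A > 0, A(B − c²) > C − c²(b₁+b₂), D > c²b₁b₂, and (C − c²(b₁+b₂))·(A(B − c²) − (C − c²(b₁+b₂))) > A²(D − c²b₁b₂). If the quartic h(z) = z⁴ + Pz³ + Qz² + Rz + S has no root in (0, ∞), then for every delay τ ≥ 0, every complex root λ of Δ_{c,τ}(λ) = 0 satisfies Re λ < 0. -/

import Mathlib

noncomputable section

open Real

/-- A = b₁+b₂+2a -/
def Ac (a b1 b2 : ℝ) : ℝ := b1 + b2 + 2*a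
/-- B = 2a(b₁+b₂)+a²+b₁b₂+2γ -/
def Bc (a b1 b2 γ : ℝ) : ℝ := 2*a*(b1+b2) + a^2 + b1*b2 + 2*γ
/-- C = (a+b₁)(ab₂+γ)+(a+b₂)(ab₁+γ) -/
def Cc (a b1 b2 γ : ℝ) : ℝ := (a+b1)*(a*b2+γ) + (a+b2)*(a*b1+γ)
/-- D = (ab₁+γ)(ab₂+γ) -/
def Dc (a b1 b2 γ : ℝ) : ℝ := (a*b1+γ)*(a*b2+γ)
/-- P = A² − 2B -/
def Pc (a b1 b2 γ : ℝ) : ℝ := (Ac a b1 b2)^2 - 2*(Bc a b1 b2 γ)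
/-- Q = B² + 2D − 2AC − c⁴ -/
def Qc (a b1 b2 γ c : ℝ) : ℝ :=
  (Bc a b1 b2 γ)^2 + 2*(Dc a b1 b2 γ) - 2*(Ac a b1 b2)*(Cc a b1 b2 γ) - c^4
/-- R = C² − 2BD − c⁴(b₁²+b₂²) -/
def Rc (a b1 b2 γ c : ℝ) : ℝ :=
  (Cc a b1 b2 γ)^2 - 2*(Bc a b1 b2 γ)*(Dc a b1 b2 γ) - c^4*(b1^2+b2^2)
/-- S = D² − c⁴b₁²b₂² -/
def Sc (a b1 b2 γ c : ℝ) : ℝ := (Dc a b1 b2 γ)^2 - c^4*b1^2*b2^2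
/-- h(z) = z⁴ + Pz³ + Qz² + Rz + S -/
def hq (a b1 b2 γ c z : ℝ) : ℝ :=
  z^4 + Pc a b1 b2 γ*z^3 + Qc a b1 b2 γ c*z^2 + Rc a b1 b2 γ c*z + Sc a b1 b2 γ c
/-- h′(z) = 4z³ + 3Pz² + 2Qz + R -/
def hq' (a b1 b2 γ c z : ℝ) : ℝ :=
  4*z^3 + 3*(Pc a b1 b2 γ)*z^2 + 2*(Qc a b1 b2 γ c)*z + Rc a b1 b2 γ c
/-- The characteristic function Δ_{c,τ}(λ) of the linearization at the trivial equilibrium. -/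
def charFun (a b1 b2 γ c τ : ℝ) (lam : ℂ) : ℂ :=
  (lam^2 + (a+b1 : ℝ)*lam + (a*b1+γ : ℝ)) * (lam^2 + (a+b2 : ℝ)*lam + (a*b2+γ : ℝ))
    - (c^2 : ℝ) * (lam + (b1 : ℝ)) * (lam + (b2 : ℝ)) * Complex.exp ((-2) * lam * (τ : ℝ))
/-- N(ω) = c²[(b₁+b₂)²ω² + (ω²−b₁b₂)²] -/
def Nfun (b1 b2 c ω : ℝ) : ℝ := c^2*((b1+b2)^2*ω^2 + (ω^2 - b1*b2)^2)
/-- a*(ω) -/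
def aStar (a b1 b2 γ c ω : ℝ) : ℝ :=
  ((ω^4 - Bc a b1 b2 γ*ω^2 + Dc a b1 b2 γ)*(b1+b2)*ω
    + (Ac a b1 b2*ω^3 - Cc a b1 b2 γ*ω)*(b1*b2 - ω^2)) / Nfun b1 b2 c ω
/-- b*(ω) -/
def bStar (a b1 b2 γ c ω : ℝ) : ℝ :=
  ((ω^4 - Bc a b1 b2 γ*ω^2 + Dc a b1 b2 γ)*(b1*b2 - ω^2)
    + (-(Ac a b1 b2)*ω^3 + Cc a b1 b2 γ*ω)*(b1+b2)*ω) / Nfun b1 b2 c ω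
/-- the critical delays τ^{(j)}(ω) -/
def tauJ (a b1 b2 γ c : ℝ) (j : ℕ) (ω : ℝ) : ℝ :=
  if 0 ≤ aStar a b1 b2 γ c ω then
    (1/(2*ω)) * (Real.arccos (bStar a b1 b2 γ c ω) + 2*(j:ℝ)*Real.pi)
  else
    (1/(2*ω)) * (2*Real.pi - Real.arccos (bStar a b1 b2 γ c ω) + 2*(j:ℝ)*Real.pi)


open Complex in
lemma quad_ne_zero {a b γ : ℝ} (ha : 0 < a) (hb : 0 < b) (hγ : 0 < γ)
    {z : ℂ} (hz : 0 ≤ z.re) :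
    z^2 + (a+b : ℝ)*z + ((a*b+γ : ℝ) : ℂ) ≠ 0 := by
  intro h
  have hre := congrArg Complex.re h
  have him := congrArg Complex.im h
  simp [Complex.add_re, Complex.add_im, Complex.mul_re, Complex.mul_im, pow_two] at hre him
  have him' : z.im * (2*z.re + (a+b)) = 0 := by linarith
  have hy : z.im = 0 := by
    rcases mul_eq_zero.mp him' with h1 | h1
    · exact h1
    · nlinarith
  rw [hy] at hre
  nlinarith

lemma normSq_quad' (s t ω : ℝ) :
    Complex.normSq (((ω:ℂ)*Complex.I)^2 + (s:ℝ)*((ω:ℂ)*Complex.I) + ((t:ℝ):ℂ))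
      = (t - ω^2)^2 + s^2*ω^2 := by
  have h : ((ω:ℂ)*Complex.I)^2 + (s:ℝ)*((ω:ℂ)*Complex.I) + ((t:ℝ):ℂ)
      = ((t - ω^2 : ℝ) : ℂ) + ((s*ω : ℝ):ℂ)*Complex.I := by
    push_cast
    linear_combination (ω:ℂ)^2 * Complex.I_sq
  rw [h, Complex.normSq_add_mul_I]; ring

/-- the polynomial part of the characteristic function -/
def Fq (a b1 b2 γ : ℝ) (z : ℂ) : ℂ :=
  (z^2 + (a+b1:ℝ)*z + ((a*b1+γ:ℝ):ℂ)) * (z^2 + (a+b2:ℝ)*z + ((a*b2+γ:ℝ):ℂ))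

/-- the "gain" function -/
def gq (a b1 b2 γ c : ℝ) (z : ℂ) : ℂ :=
  ((c^2:ℝ):ℂ) * (z + (b1:ℝ)) * (z + (b2:ℝ)) / Fq a b1 b2 γ z

lemma normSq_F (a b1 b2 γ c ω : ℝ) :
    Complex.normSq (Fq a b1 b2 γ ((ω:ℂ)*Complex.I))
      = hq a b1 b2 γ c (ω^2) + c^4*((ω^2+b1^2)*(ω^2+b2^2)) := by
  rw [Fq, map_mul, normSq_quad', normSq_quad']
  simp only [hq, Pc, Qc, Rc, Sc, Ac, Bc, Cc, Dc]
  ring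

lemma normSq_lin (b ω : ℝ) :
    Complex.normSq ((ω:ℂ)*Complex.I + (b:ℝ)) = ω^2 + b^2 := by
  rw [show (ω:ℂ)*Complex.I + (b:ℝ) = ((b:ℝ):ℂ) + ((ω:ℝ):ℂ)*Complex.I by ring,
    Complex.normSq_add_mul_I]
  ring

lemma hq_cont (a b1 b2 γ c : ℝ) : Continuous (hq a b1 b2 γ c) := by
  unfold hq; continuity

lemma hq_pos (a b1 b2 γ c : ℝ) (hb1 : 0 < b1) (hb2 : 0 < b2)
    (hRH3 : Dc a b1 b2 γ > c^2*b1*b2)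
    (hnoroot : ∀ z : ℝ, 0 < z → hq a b1 b2 γ c z ≠ 0) :
    ∀ z : ℝ, 0 ≤ z → 0 < hq a b1 b2 γ c z := by
  have hc2 : 0 ≤ c^2*b1*b2 := by positivity
  have hS : 0 < Sc a b1 b2 γ c := by
    have h1 : 0 < Dc a b1 b2 γ - c^2*b1*b2 := by linarith
    have h2 : 0 < Dc a b1 b2 γ + c^2*b1*b2 := by linarith
    have := mul_pos h1 h2
    simp only [Sc]; nlinarith
  have h0 : hq a b1 b2 γ c 0 = Sc a b1 b2 γ c := by simp [hq]
  intro z hz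
  rcases eq_or_lt_of_le hz with rfl | hz'
  · rw [h0]; exact hS
  by_contra hle
  push_neg at hle
  have hlt : hq a b1 b2 γ c z < 0 :=
    lt_of_le_of_ne hle (hnoroot z hz')
  have hcont : ContinuousOn (hq a b1 b2 γ c) (Set.Icc 0 z) :=
    (hq_cont a b1 b2 γ c).continuousOn
  have hsub := intermediate_value_Icc' (le_of_lt hz') hcont
  have h0mem : (0:ℝ) ∈ Set.Icc (hq a b1 b2 γ c z) (hq a b1 b2 γ c 0) := by
    constructor
    · exact hlt.le
    · rw [h0]; exact hS.le
  obtain ⟨w, hw, hweq⟩ := hsub h0mem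
  rcases eq_or_lt_of_le hw.1 with rfl | hwpos
  · rw [h0] at hweq; exact hS.ne hweq.symm
  · exact hnoroot w hwpos hweq

lemma exists_m (a b1 b2 γ c : ℝ) (hb1 : 0 < b1) (hb2 : 0 < b2)
    (hpos : ∀ z : ℝ, 0 ≤ z → 0 < hq a b1 b2 γ c z) :
    ∃ m : ℝ, 0 < m ∧ m ≤ 1 ∧
      ∀ z : ℝ, 0 ≤ z → m * ((z+b1^2)*(z+b2^2)) ≤ hq a b1 b2 γ c z := by
  set p := Pc a b1 b2 γ with hp
  set q1 := Qc a b1 b2 γ c - 1 with hq1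
  set r1 := Rc a b1 b2 γ c - (b1^2+b2^2) with hr1
  set s1 := Sc a b1 b2 γ c - b1^2*b2^2 with hs1
  set T : ℝ := 1 + |p| + |q1| + |r1| + |s1| with hT
  have hT1 : 1 ≤ T := by
    have := abs_nonneg p; have := abs_nonneg q1; have := abs_nonneg r1
    have := abs_nonneg s1; simp only [hT]; linarith
  have hT0 : 0 < T := by linarith
  have hbig : ∀ z : ℝ, T ≤ z → (z+b1^2)*(z+b2^2) ≤ hq a b1 b2 γ c z := by
    intro z hzT
    have hz1 : 1 ≤ z := le_trans hT1 hzT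
    have hz0 : 0 ≤ z := by linarith
    have h2 : z^2 ≤ z^3 := by nlinarith
    have h3 : z ≤ z^3 := by nlinarith
    have h4 : 1 ≤ z^3 := by nlinarith
    have h5 : T * z^3 ≤ z^4 := by nlinarith
    have hz3 : (0:ℝ) ≤ z^3 := by positivity
    have hz2 : (0:ℝ) ≤ z^2 := by positivity
    have e1 : -|p| * z^3 ≤ p * z^3 :=
      mul_le_mul_of_nonneg_right (neg_abs_le p) hz3
    have e2 : -|q1| * z^3 ≤ q1 * z^2 := by
      have h'' : -|q1| * z^3 ≤ -|q1| * z^2 :=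
        mul_le_mul_of_nonpos_left h2 (by simp)
      have h' : -|q1| * z^2 ≤ q1 * z^2 :=
        mul_le_mul_of_nonneg_right (neg_abs_le q1) hz2
      linarith
    have e3 : -|r1| * z^3 ≤ r1 * z := by
      have h'' : -|r1| * z^3 ≤ -|r1| * z :=
        mul_le_mul_of_nonpos_left h3 (by simp)
      have h' : -|r1| * z ≤ r1 * z :=
        mul_le_mul_of_nonneg_right (neg_abs_le r1) hz0
      linarith
    have e4 : -|s1| * z^3 ≤ s1 := by
      have h'' : -|s1| * z^3 ≤ -|s1| * 1 :=
        mul_le_mul_of_nonpos_left h4 (by simp)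
      have h' : -|s1| ≤ s1 := neg_abs_le s1
      linarith
    have expand : hq a b1 b2 γ c z - (z+b1^2)*(z+b2^2)
        = z^4 + p*z^3 + q1*z^2 + r1*z + s1 := by
      simp only [hq, hq1, hr1, hs1]; ring
    have hT' : T * z^3 = (1 + |p| + |q1| + |r1| + |s1|) * z^3 := by rw [hT]
    nlinarith [h5, e1, e2, e3, e4, hT', hz3]
  obtain ⟨z₀, hz₀mem, hz₀min⟩ :=
    isCompact_Icc.exists_isMinOn (Set.nonempty_Icc.mpr hT0.le)
      ((hq_cont a b1 b2 γ c).continuousOn : ContinuousOn (hq a b1 b2 γ c) (Set.Icc 0 T))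
  set m₁ := hq a b1 b2 γ c z₀ with hm₁
  have hm₁pos : 0 < m₁ := hpos z₀ hz₀mem.1
  set KT := (T+b1^2)*(T+b2^2) with hKT
  have hKTpos : 0 < KT := by positivity
  refine ⟨min (m₁ / KT) 1, lt_min (by positivity) one_pos, min_le_right _ _, ?_⟩
  intro z hz
  set m := min (m₁ / KT) 1 with hm
  have hKz : 0 < (z+b1^2)*(z+b2^2) := by positivity
  rcases le_total z T with hzT | hzT
  · have hKle : (z+b1^2)*(z+b2^2) ≤ KT := by nlinarith
    have h1 : m * ((z+b1^2)*(z+b2^2)) ≤ (m₁/KT) * KT := by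
      have hh := min_le_left (m₁ / KT) 1
      calc m * ((z+b1^2)*(z+b2^2)) ≤ (m₁/KT) * ((z+b1^2)*(z+b2^2)) :=
            mul_le_mul_of_nonneg_right hh hKz.le
        _ ≤ (m₁/KT) * KT := mul_le_mul_of_nonneg_left hKle (by positivity)
    rw [div_mul_cancel₀ _ hKTpos.ne'] at h1
    exact h1.trans (hz₀min ⟨hz, hzT⟩)
  · have h1 : m * ((z+b1^2)*(z+b2^2)) ≤ 1 * ((z+b1^2)*(z+b2^2)) :=
      mul_le_mul_of_nonneg_right (min_le_right _ _) hKz.le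
    rw [one_mul] at h1
    exact h1.trans (hbig z hzT)

def Complex.abs : AbsoluteValue ℂ ℝ := NormedField.toAbsoluteValue ℂ

lemma Complex.norm_eq_abs (z : ℂ) : ‖z‖ = Complex.abs z := rfl

lemma Complex.abs_apply (z : ℂ) : Complex.abs z = Real.sqrt (Complex.normSq z) :=
  Complex.norm_def z

lemma Complex.abs_ofReal (r : ℝ) : Complex.abs (r : ℂ) = |r| := by
  rw [← Complex.norm_eq_abs]; simp

lemma Complex.abs_exp (z : ℂ) : Complex.abs (Complex.exp z) = Real.exp z.re :=
  Complex.norm_exp z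

lemma abs_le_abs_add_real {z : ℂ} (hz : 0 ≤ z.re) {b : ℝ} (hb : 0 ≤ b) :
    Complex.abs z ≤ Complex.abs (z + (b:ℂ)) := by
  have h : Complex.normSq z ≤ Complex.normSq (z + (b:ℂ)) := by
    simp only [Complex.normSq_apply, Complex.add_re, Complex.add_im,
      Complex.ofReal_re, Complex.ofReal_im]
    nlinarith
  rw [Complex.abs_apply, Complex.abs_apply]
  exact Real.sqrt_le_sqrt h

lemma quad_abs_lb {a b γ : ℝ} (ha : 0 ≤ a) (hb : 0 ≤ b) (hγ : 0 ≤ γ)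
    {z : ℂ} (hz : 0 ≤ z.re) :
    (Complex.abs z)^2 - γ ≤ Complex.abs (z^2 + (a+b : ℝ)*z + ((a*b+γ : ℝ):ℂ)) := by
  have h1 : Complex.abs ((z + (a:ℝ)) * (z + (b:ℝ)))
      ≤ Complex.abs (z^2 + (a+b : ℝ)*z + ((a*b+γ : ℝ):ℂ)) + Complex.abs ((γ:ℝ):ℂ) := by
    calc Complex.abs ((z + (a:ℝ)) * (z + (b:ℝ)))
        = Complex.abs ((z^2 + (a+b : ℝ)*z + ((a*b+γ : ℝ):ℂ)) + (-((γ:ℝ):ℂ))) := by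
          congr 1; push_cast; ring
      _ ≤ Complex.abs (z^2 + (a+b : ℝ)*z + ((a*b+γ : ℝ):ℂ)) + Complex.abs (-((γ:ℝ):ℂ)) :=
          Complex.abs.add_le _ _
      _ = _ := by rw [AbsoluteValue.map_neg]
  have h2 : (Complex.abs z)^2 ≤ Complex.abs ((z + (a:ℝ)) * (z + (b:ℝ))) := by
    rw [map_mul, pow_two]
    exact mul_le_mul (abs_le_abs_add_real hz ha) (abs_le_abs_add_real hz hb)
      (Complex.abs.nonneg z) (Complex.abs.nonneg _)
  have h3 : Complex.abs ((γ:ℝ):ℂ) = γ := by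
    rw [Complex.abs_ofReal]; exact _root_.abs_of_nonneg hγ
  linarith

lemma gq_bound (a b1 b2 γ c : ℝ) (ha : 0 < a) (hb1 : 0 < b1) (hb2 : 0 < b2) (hγ : 0 < γ)
    {z : ℂ} (hz : 0 ≤ z.re) (hR : b1 + b2 + 2*γ + 2 ≤ Complex.abs z) :
    Complex.abs (gq a b1 b2 γ c z) ≤ 16*c^2/(Complex.abs z)^2 := by
  set r := Complex.abs z with hr
  have hr2 : 2 ≤ r := by linarith
  have hr0 : 0 < r := by linarith
  have hγr : 2*γ ≤ r := by linarith
  have hγr2 : 2*γ ≤ r^2 := by nlinarith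
  have hq1 : r^2/2 ≤ Complex.abs (z^2 + (a+b1:ℝ)*z + ((a*b1+γ:ℝ):ℂ)) := by
    have := quad_abs_lb ha.le hb1.le hγ.le hz
    linarith
  have hq2 : r^2/2 ≤ Complex.abs (z^2 + (a+b2:ℝ)*z + ((a*b2+γ:ℝ):ℂ)) := by
    have := quad_abs_lb ha.le hb2.le hγ.le hz
    linarith
  have hFq : r^4/4 ≤ Complex.abs (Fq a b1 b2 γ z) := by
    rw [Fq, map_mul]
    calc r^4/4 = (r^2/2) * (r^2/2) := by ring
      _ ≤ _ := mul_le_mul hq1 hq2 (by positivity) (Complex.abs.nonneg _)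
  have hnum : Complex.abs (((c^2:ℝ):ℂ) * (z + (b1:ℝ)) * (z + (b2:ℝ))) ≤ 4*c^2*r^2 := by
    rw [map_mul, map_mul, Complex.abs_ofReal, _root_.abs_of_nonneg (sq_nonneg c)]
    have h1 : Complex.abs (z + (b1:ℝ)) ≤ r + b1 := by
      calc Complex.abs (z + (b1:ℝ)) ≤ r + Complex.abs ((b1:ℝ):ℂ) := Complex.abs.add_le _ _
        _ = r + b1 := by rw [Complex.abs_ofReal, _root_.abs_of_nonneg hb1.le]
    have h2 : Complex.abs (z + (b2:ℝ)) ≤ r + b2 := by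
      calc Complex.abs (z + (b2:ℝ)) ≤ r + Complex.abs ((b2:ℝ):ℂ) := Complex.abs.add_le _ _
        _ = r + b2 := by rw [Complex.abs_ofReal, _root_.abs_of_nonneg hb2.le]
    have h3 : r + b1 ≤ 2*r := by linarith
    have h4 : r + b2 ≤ 2*r := by linarith
    calc c^2 * Complex.abs (z + (b1:ℝ)) * Complex.abs (z + (b2:ℝ))
        ≤ c^2 * (2*r) * (2*r) := by
          apply mul_le_mul
          · exact mul_le_mul_of_nonneg_left (h1.trans h3) (sq_nonneg c)
          · exact h2.trans h4
          · exact Complex.abs.nonneg _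
          · positivity
      _ = 4*c^2*r^2 := by ring
  rw [gq, map_div₀]
  calc Complex.abs (((c^2:ℝ):ℂ) * (z + (b1:ℝ)) * (z + (b2:ℝ))) / Complex.abs (Fq a b1 b2 γ z)
      ≤ (4*c^2*r^2) / (r^4/4) :=
        div_le_div₀ (by positivity) hnum (by positivity) hFq
    _ = 16*c^2/r^2 := by field_simp; ring

/-- Routh–Hurwitz hypothesis and h having no positive root imply
asymptotic stability (all characteristic roots in the open left half plane) for all delays τ ≥ 0. -/
theorem stmt1 (a b1 b2 γ c : ℝ)
    (ha : 0 < a) (hb1 : 0 < b1) (hb2 : 0 < b2) (hγ : 0 < γ)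
    (hRH1 : 0 < Ac a b1 b2)
    (hRH2 : Ac a b1 b2 * (Bc a b1 b2 γ - c^2) > Cc a b1 b2 γ - c^2*(b1+b2))
    (hRH3 : Dc a b1 b2 γ > c^2*b1*b2)
    (hRH4 : (Cc a b1 b2 γ - c^2*(b1+b2)) *
        (Ac a b1 b2 * (Bc a b1 b2 γ - c^2) - (Cc a b1 b2 γ - c^2*(b1+b2)))
      > (Ac a b1 b2)^2 * (Dc a b1 b2 γ - c^2*b1*b2))
    (hnoroot : ∀ z : ℝ, 0 < z → hq a b1 b2 γ c z ≠ 0) :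
    ∀ τ : ℝ, 0 ≤ τ → ∀ lam : ℂ, charFun a b1 b2 γ c τ lam = 0 → lam.re < 0 := by
  intro τ hτ lam hlam
  by_contra hcon
  push_neg at hcon
  have hpos := hq_pos a b1 b2 γ c hb1 hb2 hRH3 hnoroot
  obtain ⟨m, hm0, hm1, hmK⟩ := exists_m a b1 b2 γ c hb1 hb2 hpos
  have hmc : 0 < m + c^4 := by positivity
  set ρ := Real.sqrt (c^4/(m + c^4)) with hρ
  have hρsq : ρ^2 = c^4/(m+c^4) := Real.sq_sqrt (by positivity)
  have hρlt : ρ < 1 := by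
    have h1 : c^4/(m+c^4) < 1 := by
      rw [div_lt_one hmc]; linarith
    nlinarith [Real.sqrt_nonneg (c^4/(m+c^4))]
  -- nonvanishing of Fq on the closed right half-plane
  have hF : ∀ z : ℂ, 0 ≤ z.re → Fq a b1 b2 γ z ≠ 0 := fun z hz =>
    mul_ne_zero (quad_ne_zero ha hb1 hγ hz) (quad_ne_zero ha hb2 hγ hz)
  -- differentiability
  have hd : DiffContOnCl ℂ (gq a b1 b2 γ c) {z : ℂ | 0 < z.re} := by
    have hsub : closure {z : ℂ | 0 < z.re} ⊆ {z : ℂ | 0 ≤ z.re} :=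
      closure_minimal (fun z hz => show (0:ℝ) ≤ z.re from le_of_lt hz)
        (isClosed_le continuous_const Complex.continuous_re)
    apply DifferentiableOn.diffContOnCl
    intro z hz
    have hz' : 0 ≤ z.re := hsub hz
    apply DifferentiableAt.differentiableWithinAt
    apply DifferentiableAt.div
    · fun_prop
    · unfold Fq; fun_prop
    · exact hF z hz'
  -- growth bound
  set R : ℝ := b1 + b2 + 2*γ + 2 with hRdef
  have hexp : ∃ k < (2:ℝ), ∃ B, (gq a b1 b2 γ c) =O[Bornology.cobounded ℂ ⊓
      Filter.principal {z : ℂ | 0 < z.re}] fun z => Real.exp (B * (Complex.abs z) ^ k) := by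
    refine ⟨1, one_lt_two, 0, ?_⟩
    rw [Asymptotics.isBigO_iff]
    refine ⟨16*c^2, ?_⟩
    rw [Filter.eventually_inf_principal]
    have hev : ∀ᶠ z : ℂ in Bornology.cobounded ℂ, R + 1 ≤ ‖z‖ :=
      tendsto_norm_cobounded_atTop.eventually_ge_atTop (R+1)
    filter_upwards [hev] with z hz1 hz2
    have habs : R ≤ Complex.abs z := by
      rw [← Complex.norm_eq_abs]; linarith
    have hb := gq_bound a b1 b2 γ c ha hb1 hb2 hγ (le_of_lt hz2) habs
    have habs1 : 1 ≤ Complex.abs z := by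
      have : (0:ℝ) ≤ R := by positivity
      rw [← Complex.norm_eq_abs]; linarith
    have h2 : 16*c^2/(Complex.abs z)^2 ≤ 16*c^2 := by
      apply div_le_self (by positivity)
      nlinarith
    simp only [pow_one, zero_mul, Real.exp_zero, norm_one, mul_one]
    rw [Complex.norm_eq_abs]
    linarith
  -- tendsto zero on the real axis
  have hre : Filter.Tendsto (fun x : ℝ => gq a b1 b2 γ c x) Filter.atTop (nhds 0) := by
    apply squeeze_zero_norm' (a := fun x : ℝ => 16*c^2/x^2)
    · filter_upwards [Filter.eventually_ge_atTop (max R 1)] with x hx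
      have hx1 : (1:ℝ) ≤ x := le_trans (le_max_right _ _) hx
      have hxR : R ≤ x := le_trans (le_max_left _ _) hx
      have habs : Complex.abs (x:ℂ) = x := by
        rw [Complex.abs_ofReal]; exact _root_.abs_of_nonneg (by linarith)
      have hre0 : (0:ℝ) ≤ (Complex.ofReal x).re := by
        rw [Complex.ofReal_re]; linarith
      have hb := gq_bound a b1 b2 γ c ha hb1 hb2 hγ hre0 (by rw [habs]; exact hxR)
      rw [Complex.norm_eq_abs]
      rw [habs] at hb; exact hb
    · exact Filter.Tendsto.div_atTop tendsto_const_nhds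
        (Filter.tendsto_pow_atTop two_ne_zero)
  -- boundary bound
  have him : ∀ x : ℝ, ‖gq a b1 b2 γ c ((x:ℂ) * Complex.I)‖ ≤ ρ := by
    intro x
    have hK : 0 < (x^2+b1^2)*(x^2+b2^2) := by positivity
    have hKm := hmK (x^2) (sq_nonneg x)
    have hhq := hpos (x^2) (sq_nonneg x)
    have hc4K : (0:ℝ) ≤ c^4*((x^2+b1^2)*(x^2+b2^2)) := by positivity
    have hden : 0 < hq a b1 b2 γ c (x^2) + c^4*((x^2+b1^2)*(x^2+b2^2)) := by linarith
    have hle : Complex.normSq (gq a b1 b2 γ c ((x:ℂ)*Complex.I)) ≤ c^4/(m+c^4) := by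
      rw [gq, map_div₀, map_mul, map_mul, Complex.normSq_ofReal,
        normSq_lin b1 x, normSq_lin b2 x, normSq_F a b1 b2 γ c x]
      rw [div_le_div_iff₀ hden hmc]
      have hc4 : (0:ℝ) ≤ c^4 := by positivity
      nlinarith [mul_le_mul_of_nonneg_left hKm hc4]
    rw [Complex.norm_eq_abs, Complex.abs_apply, hρ]
    exact Real.sqrt_le_sqrt hle
  -- Phragmén–Lindelöf
  have hgle : ‖gq a b1 b2 γ c lam‖ ≤ ρ :=
    PhragmenLindelof.right_half_plane_of_tendsto_zero_on_real hd hexp hre him hcon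
  -- the root relation forces ‖g lam‖ ≥ 1
  have hFlam : Fq a b1 b2 γ lam ≠ 0 := hF lam hcon
  have h0 : Fq a b1 b2 γ lam
      = ((c^2:ℝ):ℂ) * (lam + (b1:ℝ)) * (lam + (b2:ℝ)) * Complex.exp ((-2) * lam * (τ:ℝ)) := by
    have h := hlam
    rw [charFun, sub_eq_zero] at h
    exact h
  have hnum_ne : ((c^2:ℝ):ℂ) * (lam + (b1:ℝ)) * (lam + (b2:ℝ)) ≠ 0 := by
    intro h
    apply hFlam
    rw [h0, h, zero_mul]
  have hglam : gq a b1 b2 γ c lam = (Complex.exp ((-2) * lam * (τ:ℝ)))⁻¹ := by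
    rw [gq, h0, div_mul_eq_div_div, div_self hnum_ne, one_div]
  have hrecomp : ((-2 : ℂ) * lam * (τ:ℝ)).re = -(2*lam.re*τ) := by
    simp [Complex.mul_re, Complex.mul_im]
  have hnorm : ‖gq a b1 b2 γ c lam‖ = Real.exp (2*lam.re*τ) := by
    rw [hglam, norm_inv, Complex.norm_eq_abs, Complex.abs_exp, hrecomp,
      Real.exp_neg, inv_inv]
  have hge1 : (1:ℝ) ≤ ‖gq a b1 b2 γ c lam‖ := by
    rw [hnorm]
    exact Real.one_le_exp (mul_nonneg (mul_nonneg (by norm_num) hcon) hτ)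
  linarith
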